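/- Let n ≥ 0 be an integer, let b : {0,1,…,2n} → ℕ, let z > 0 and t ∈ (0,1) be real numbers with z^j · t < 1 for all 0 ≤ j ≤ 2n. Define F(t) = ∑_{j=0}^{2n} (-1)^{j+1} b_j · log(1 - z^j t). Then F(t) - t·log(t)·F′(t) = ∑_{j=0}^{2n} (-1)^j · b_j · ( S(z^j t, 1 - z^j t) + z^j t · log(z^j) ) / (1 - z^j t), where S(u,1-u) = -u·log u - (1-u)·log(1-u) is the binary Shannon entropy. -/

import Mathlib

/-- the motivic entropy of the Poincaré polynomial measure. With
`F(t) = ∑_{j=0}^{2n} (-1)^{j+1} b_j log(1 - z^j t)` one has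
`F(t) - t·log(t)·F′(t) = ∑_j (-1)^j b_j (S(z^j t, 1-z^j t) + z^j t·log(z^j))/(1 - z^j t)`. -/
theorem stmt_7 (n : ℕ) (b : ℕ → ℕ) (z t : ℝ) (hz : 0 < z) (ht0 : 0 < t) (ht1 : t < 1)
    (hzt : ∀ j ≤ 2 * n, z ^ j * t < 1) :
    (∑ j ∈ Finset.range (2 * n + 1), (-1 : ℝ) ^ (j + 1) * (b j : ℝ) * Real.log (1 - z ^ j * t))
      - t * Real.log t * deriv (fun u : ℝ =>
          ∑ j ∈ Finset.range (2 * n + 1),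
            (-1 : ℝ) ^ (j + 1) * (b j : ℝ) * Real.log (1 - z ^ j * u)) t
      = ∑ j ∈ Finset.range (2 * n + 1),
          (-1 : ℝ) ^ j * (b j : ℝ)
            * ((-(z ^ j * t) * Real.log (z ^ j * t)
                - (1 - z ^ j * t) * Real.log (1 - z ^ j * t))
               + z ^ j * t * Real.log (z ^ j))
            / (1 - z ^ j * t) := by
  have hne : ∀ j ∈ Finset.range (2 * n + 1), (1 : ℝ) - z ^ j * t ≠ 0 := by
    intro j hj
    have hj' := Finset.mem_range.mp hj
    have := hzt j (by omega)
    linarith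
  have hderiv : deriv (fun u : ℝ =>
      ∑ j ∈ Finset.range (2 * n + 1),
        (-1 : ℝ) ^ (j + 1) * (b j : ℝ) * Real.log (1 - z ^ j * u)) t
      = ∑ j ∈ Finset.range (2 * n + 1),
        (-1 : ℝ) ^ (j + 1) * (b j : ℝ) * ((1 - z ^ j * t)⁻¹ * (-(z ^ j))) := by
    refine HasDerivAt.deriv ?_
    refine HasDerivAt.fun_sum fun j hj => ?_
    have h1 : HasDerivAt (fun u : ℝ => 1 - z ^ j * u) (-(z ^ j)) t := by
      simpa using ((hasDerivAt_id t).const_mul (z ^ j)).const_sub 1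
    have h2 := (Real.hasDerivAt_log (hne j hj)).comp t h1
    exact h2.const_mul _
  rw [hderiv, Finset.mul_sum, ← Finset.sum_sub_distrib]
  refine Finset.sum_congr rfl fun j hj => ?_
  have hne' := hne j hj
  have hzj : (0 : ℝ) < z ^ j := pow_pos hz j
  have hlog : Real.log (z ^ j * t) = Real.log (z ^ j) + Real.log t :=
    Real.log_mul (ne_of_gt hzj) (ne_of_gt ht0)
  rw [hlog, pow_succ]
  field_simp
  ring
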